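/- arXiv:2505.09162 — 3 statements merged into one kernel-verified Lean document; each statement's English description precedes it below -/
import Mathlib

section
/- Let γ_f > 1 and f(α) = 1 - cos(α) - α²/(2γ_f). If γ_f < 2π, then f has exactly three real roots: {-α*, 0, α*} for some α* > 0. -/
open Real

private lemma one_sub_cos_eq (α : ℝ) : 1 - Real.cos α = 2 * Real.sin (α / 2) ^ 2 := by
  have h := Real.cos_two_mul' (α / 2)
  have h2 := Real.sin_sq_add_cos_sq (α / 2)
  rw [show 2 * (α / 2) = α by ring] at h
  linarith

theorem exactly_three_roots
    (γf : ℝ) (hγ : 1 < γf) (hγ' : γf < 2 * Real.pi) :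
    let f : ℝ → ℝ := fun α => 1 - Real.cos α - α ^ 2 / (2 * γf)
    ∃ αstar : ℝ, 0 < αstar ∧
      {α : ℝ | f α = 0} = {-αstar, 0, αstar} := by
  intro f
  have hπ := Real.pi_gt_three
  have hγ0 : (0:ℝ) < γf := by linarith
  set c : ℝ := Real.sqrt γf with hc
  have hc0 : 0 < c := Real.sqrt_pos.mpr hγ0
  have hc1 : 1 < c := by
    rw [hc]
    have := (Real.lt_sqrt (x := 1) (y := γf) (by norm_num)).mpr (by nlinarith)
    simpa using this
  have hcπ : c < π := by
    rw [hc]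
    exact (Real.sqrt_lt' (by linarith)).mpr (by nlinarith)
  have hcsq : c ^ 2 = γf := Real.sq_sqrt hγ0.le
  -- g β = c sin β - β
  set g : ℝ → ℝ := fun β => c * Real.sin β - β with hg
  have hgderiv : ∀ β : ℝ, deriv g β = c * Real.cos β - 1 := by
    intro β
    have h1 : HasDerivAt g (c * Real.cos β - 1) β := by
      exact ((Real.hasDerivAt_sin β).const_mul c).sub (hasDerivAt_id β)
    exact h1.deriv
  have hgcont : Continuous g := by
    exact (continuous_const.mul Real.continuous_sin).sub continuous_id
  -- β₀ = arccos (1/c)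
  set β₀ : ℝ := Real.arccos (1 / c) with hβ₀def
  have h1c0 : 0 < 1 / c := by positivity
  have h1c1 : 1 / c < 1 := by
    rw [div_lt_one hc0]; exact hc1
  have hβ₀pos : 0 < β₀ := Real.arccos_pos.mpr h1c1
  have hβ₀ltπ : β₀ < π / 2 := Real.arccos_lt_pi_div_two.mpr h1c0
  have hcosβ₀ : Real.cos β₀ = 1 / c := Real.cos_arccos (by linarith) h1c1.le
  -- g strictly monotone on [0, β₀]
  have hmono : StrictMonoOn g (Set.Icc 0 β₀) := by
    apply strictMonoOn_of_deriv_pos (convex_Icc 0 β₀) hgcont.continuousOn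
    intro x hx
    rw [interior_Icc] at hx
    rw [hgderiv]
    have hx1 : Real.cos x > Real.cos β₀ := by
      apply Real.strictAntiOn_cos ⟨hx.1.le, by linarith [hx.2]⟩ ⟨hβ₀pos.le, by linarith⟩ hx.2
    rw [hcosβ₀] at hx1
    have : 1 < c * Real.cos x := by
      rw [gt_iff_lt, div_lt_iff₀ hc0] at hx1; linarith [hx1]
    linarith
  -- g strictly antitone on [β₀, π]
  have hanti : StrictAntiOn g (Set.Icc β₀ π) := by
    apply strictAntiOn_of_deriv_neg (convex_Icc β₀ π) hgcont.continuousOn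
    intro x hx
    rw [interior_Icc] at hx
    rw [hgderiv]
    have hx1 : Real.cos x < Real.cos β₀ := by
      apply Real.strictAntiOn_cos ⟨hβ₀pos.le, by linarith⟩ ⟨by linarith [hx.1], hx.2.le⟩ hx.1
    rw [hcosβ₀] at hx1
    have : c * Real.cos x < 1 := by
      rw [lt_div_iff₀ hc0] at hx1; linarith
    linarith
  have hg0 : g 0 = 0 := by simp [hg]
  have hgβ₀pos : 0 < g β₀ := by
    have := hmono ⟨le_refl 0, hβ₀pos.le⟩ ⟨hβ₀pos.le, le_refl β₀⟩ hβ₀pos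
    rwa [hg0] at this
  have hgπ : g π = -π := by simp [hg]
  -- IVT : root β* in [β₀, π]
  have hβ₀π : β₀ ≤ π := by linarith
  have hIVT := intermediate_value_Icc' hβ₀π hgcont.continuousOn
  have h0mem : (0:ℝ) ∈ Set.Icc (g π) (g β₀) := by
    constructor
    · rw [hgπ]; linarith
    · exact hgβ₀pos.le
  obtain ⟨βs, hβsmem, hβsroot⟩ := hIVT h0mem
  have hβspos : 0 < βs := lt_of_lt_of_le hβ₀pos hβsmem.1
  have hβsπ : βs ≤ π := hβsmem.2
  -- uniqueness of roots of g in (0, π]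
  have huniq : ∀ β : ℝ, 0 < β → β ≤ π → g β = 0 → β = βs := by
    intro β hb0 hbπ hbroot
    by_cases hle : β ≤ β₀
    · exfalso
      have := hmono ⟨le_refl 0, hβ₀pos.le⟩ ⟨hb0.le, hle⟩ hb0
      rw [hg0, hbroot] at this
      exact lt_irrefl 0 this
    · push_neg at hle
      exact hanti.injOn ⟨hle.le, hbπ⟩ ⟨hβsmem.1, hβsπ⟩ (by rw [hbroot, hβsroot])
  -- characterization: for α > 0, f α = 0 ↔ α = 2 βs
  have hpos : ∀ α : ℝ, 0 < α → (f α = 0 ↔ α = 2 * βs) := by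
    intro α hα
    constructor
    · intro hroot
      -- first: α ≤ 2π
      have hα2π : α ≤ 2 * π := by
        by_contra hgt
        push_neg at hgt
        have h1 : Real.cos α ≥ -1 := Real.neg_one_le_cos α
        have h2 : α ^ 2 / (2 * γf) > 2 := by
          rw [gt_iff_lt, lt_div_iff₀ (by linarith)]
          nlinarith
        have : f α < 0 := by simp only [f]; linarith
        rw [hroot] at this; exact lt_irrefl 0 this
      -- f α = 0 → sin(α/2)^2 = α²/(4 γf)
      have hfa : 1 - Real.cos α - α ^ 2 / (2 * γf) = 0 := hroot
      rw [one_sub_cos_eq] at hfa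
      have hα2eq : α ^ 2 = 4 * γf * Real.sin (α / 2) ^ 2 := by
        have hd : α ^ 2 / (2 * γf) = 2 * Real.sin (α / 2) ^ 2 := by linarith
        rw [div_eq_iff (by positivity : (2 * γf) ≠ 0)] at hd
        linarith
      have hsq : (c * Real.sin (α / 2)) ^ 2 = (α / 2) ^ 2 := by
        rw [mul_pow, hcsq]
        nlinarith [hα2eq]
      have hsin_nonneg : 0 ≤ Real.sin (α / 2) :=
        Real.sin_nonneg_of_nonneg_of_le_pi (by linarith) (by linarith)
      have heq : c * Real.sin (α / 2) = α / 2 := by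
        have h1 : 0 ≤ c * Real.sin (α / 2) := by positivity
        have h2 : (0:ℝ) ≤ α / 2 := by linarith
        calc c * Real.sin (α / 2) = Real.sqrt ((c * Real.sin (α / 2)) ^ 2) :=
              (Real.sqrt_sq h1).symm
          _ = Real.sqrt ((α / 2) ^ 2) := by rw [hsq]
          _ = α / 2 := Real.sqrt_sq h2
      have hgroot : g (α / 2) = 0 := by simp [hg]; linarith
      have := huniq (α / 2) (by linarith) (by linarith) hgroot
      linarith
    · intro hα2
      subst hα2
      have heq : c * Real.sin βs = βs := by
        have h := hβsroot
        simp only [hg] at h; linarith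
      have key : γf * Real.sin βs ^ 2 = βs ^ 2 := by
        have h := congrArg (· ^ 2) heq
        simpa [mul_pow, hcsq] using h
      show 1 - Real.cos (2 * βs) - (2 * βs) ^ 2 / (2 * γf) = 0
      rw [one_sub_cos_eq, show (2 * βs) / 2 = βs by ring,
        show (2 * βs) ^ 2 = 4 * (γf * Real.sin βs ^ 2) by rw [key]; ring]
      field_simp
      ring
  -- f even
  have heven : ∀ α : ℝ, f (-α) = f α := by
    intro α; simp [f, Real.cos_neg]
  refine ⟨2 * βs, by linarith, ?_⟩
  ext α
  simp only [Set.mem_setOf_eq, Set.mem_insert_iff, Set.mem_singleton_iff]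
  rcases lt_trichotomy α 0 with hneg | hzero | hposα
  · rw [← heven α, hpos (-α) (by linarith)]
    constructor
    · intro h; left; linarith
    · rintro (h | h | h)
      · linarith
      · linarith
      · linarith
  · subst hzero
    simp only [f]
    norm_num
  · rw [hpos α hposα]
    constructor
    · intro h; right; right; exact h
    · rintro (h | h | h)
      · linarith
      · linarith
      · exact h
end

section
/- Let γ_f > 1 and let α* ∈ (0, π) be the unique root of sin(α)/α = γ_f^{-1/4} in (0, π). Let N₁, N₂ be positive integers. If z̄_i ∈ [-2α*/N_i, 2α*/N_i] for i = 1,2, then ∏_{i=1,2} (1/N_i)·|sin(N_i z̄_i / 2)| / |sin(z̄_i / 2)| ≥ 1/√(γ_f), where the factor is interpreted as 1 when z̄_i = 0. -/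
open Real

/-- Normalized Dirichlet-kernel magnitude of an `N`-element array, interpreted as `1` at `z = 0`. -/
noncomputable def dirichletFactor (N : ℕ) (z : ℝ) : ℝ :=
  if z = 0 then 1 else (1 / (N : ℝ)) * |Real.sin (N * z / 2)| / |Real.sin (z / 2)|

/-- For `|x| ≤ π`, `|sin x| = sin |x|`. -/
lemma abs_sin_eq_sin_abs {x : ℝ} (h : |x| ≤ Real.pi) : |Real.sin x| = Real.sin |x| := by
  have h1 : |Real.sin x| = |Real.sin (|x|)| := by
    rcases abs_cases x with h1 | h1 <;> rw [h1.1] <;> simp [Real.sin_neg]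
  rw [h1, abs_of_nonneg (Real.sin_nonneg_of_nonneg_of_le_pi (abs_nonneg x) h)]

/-- `sin t / t` is antitone on `(0, π]` (concavity of `sin`). -/
lemma sinc_ge {t α : ℝ} (ht : 0 < t) (htα : t ≤ α) (hαπ : α ≤ Real.pi) :
    Real.sin α / α ≤ Real.sin t / t := by
  have hα0 : 0 < α := lt_of_lt_of_le ht htα
  have hkey : (t / α) * Real.sin α ≤ Real.sin t := by
    have hc := strictConcaveOn_sin_Icc.concaveOn.2
      (Set.mem_Icc.mpr ⟨le_rfl, Real.pi_pos.le⟩)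
      (Set.mem_Icc.mpr ⟨hα0.le, hαπ⟩)
      (show (0:ℝ) ≤ 1 - t / α by
        have : t / α ≤ 1 := (div_le_one hα0).mpr htα; linarith)
      (show (0:ℝ) ≤ t / α by positivity)
      (by ring)
    have ht' : (1 - t / α) • (0:ℝ) + (t / α) • α = t := by
      simp only [smul_eq_mul, mul_zero, zero_add]; exact div_mul_cancel₀ t hα0.ne'
    rw [ht'] at hc
    simpa using hc
  rw [div_le_div_iff₀ hα0 ht]
  have := mul_le_mul_of_nonneg_left hkey hα0.le
  calc Real.sin α * t = α * ((t / α) * Real.sin α) := by field_simp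
    _ ≤ α * Real.sin t := this
    _ = Real.sin t * α := mul_comm _ _

lemma dirichletFactor_ge
    (γf : ℝ) (hγ : 1 < γf)
    (αstar : ℝ) (hα : αstar ∈ Set.Ioo 0 Real.pi)
    (hroot : Real.sin αstar / αstar = γf ^ (-(1 / 4 : ℝ)))
    (N : ℕ) (hN : 0 < N) (z : ℝ) (hz : |z| ≤ 2 * αstar / N) :
    γf ^ (-(1 / 4 : ℝ)) ≤ dirichletFactor N z := by
  obtain ⟨hα0, hαπ⟩ := hα
  by_cases h0 : z = 0
  · rw [dirichletFactor, if_pos h0, ← hroot]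
    exact (div_le_one hα0).mpr (Real.sin_le hα0.le)
  · rw [dirichletFactor, if_neg h0]
    have hNR : (0:ℝ) < N := Nat.cast_pos.mpr hN
    have hN1 : (1:ℝ) ≤ N := Nat.one_le_cast.mpr hN
    have hzabs : 0 < |z| := abs_pos.mpr h0
    -- |N*z/2| = N*|z|/2 ≤ αstar
    have htle : (N:ℝ) * |z| / 2 ≤ αstar := by
      have h1 := mul_le_mul_of_nonneg_left hz hNR.le
      have h2 : (N:ℝ) * (2 * αstar / N) = 2 * αstar := by field_simp
      rw [h2] at h1
      linarith
    have htabs : |(N:ℝ) * z / 2| = (N:ℝ) * |z| / 2 := by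
      rw [abs_div, abs_mul, abs_of_nonneg hNR.le]
      norm_num
    have htpos : 0 < (N:ℝ) * |z| / 2 := by positivity
    have htπ : |(N:ℝ) * z / 2| ≤ Real.pi := by rw [htabs]; linarith
    -- |z/2| ≤ αstar < π
    have hzhalf : |z / 2| = |z| / 2 := by rw [abs_div]; norm_num
    have hzhalf_le : |z| / 2 ≤ (N:ℝ) * |z| / 2 := by
      have := mul_le_mul_of_nonneg_right hN1 (abs_nonneg z)
      rw [one_mul] at this
      linarith
    have hzπ : |z / 2| ≤ Real.pi := by rw [hzhalf]; linarith
    -- sin part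
    have hBeq : |Real.sin (z / 2)| = Real.sin (|z| / 2) := by
      rw [abs_sin_eq_sin_abs hzπ, hzhalf]
    have hBpos : 0 < |Real.sin (z / 2)| := by
      rw [hBeq]
      exact Real.sin_pos_of_pos_of_lt_pi (by positivity) (by linarith)
    have hBle : |Real.sin (z / 2)| ≤ |z| / 2 := by
      rw [hBeq]
      exact Real.sin_le (by positivity)
    calc γf ^ (-(1 / 4 : ℝ)) = Real.sin αstar / αstar := hroot.symm
      _ ≤ Real.sin |(N:ℝ) * z / 2| / |(N:ℝ) * z / 2| := by
          rw [htabs]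
          exact sinc_ge htpos htle hαπ.le
      _ = |Real.sin ((N:ℝ) * z / 2)| / ((N:ℝ) * |z| / 2) := by
          rw [abs_sin_eq_sin_abs htπ, htabs]
      _ ≤ |Real.sin ((N:ℝ) * z / 2)| / ((N:ℝ) * |Real.sin (z / 2)|) := by
          apply div_le_div_of_nonneg_left (abs_nonneg _) (by positivity)
          calc (N:ℝ) * |Real.sin (z / 2)| ≤ (N:ℝ) * (|z| / 2) :=
                mul_le_mul_of_nonneg_left hBle hNR.le
            _ = (N:ℝ) * |z| / 2 := by ring
      _ = 1 / (N:ℝ) * |Real.sin ((N:ℝ) * z / 2)| / |Real.sin (z / 2)| := by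
          field_simp

theorem ura_gain_ratio_bound
    (γf : ℝ) (hγ : 1 < γf)
    (αstar : ℝ) (hα : αstar ∈ Set.Ioo 0 Real.pi)
    (hroot : Real.sin αstar / αstar = γf ^ (-(1 / 4 : ℝ)))
    (N₁ N₂ : ℕ) (hN₁ : 0 < N₁) (hN₂ : 0 < N₂)
    (z₁ z₂ : ℝ)
    (hz₁ : z₁ ∈ Set.Icc (-(2 * αstar / N₁)) (2 * αstar / N₁))
    (hz₂ : z₂ ∈ Set.Icc (-(2 * αstar / N₂)) (2 * αstar / N₂)) :
    dirichletFactor N₁ z₁ * dirichletFactor N₂ z₂ ≥ 1 / Real.sqrt γf := by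
  have hγ0 : (0:ℝ) < γf := by linarith
  have hb₁ := dirichletFactor_ge γf hγ αstar hα hroot N₁ hN₁ z₁ (abs_le.mpr ⟨hz₁.1, hz₁.2⟩)
  have hb₂ := dirichletFactor_ge γf hγ αstar hα hroot N₂ hN₂ z₂ (abs_le.mpr ⟨hz₂.1, hz₂.2⟩)
  have hpos : (0:ℝ) < γf ^ (-(1 / 4 : ℝ)) := Real.rpow_pos_of_pos hγ0 _
  have hmul : γf ^ (-(1 / 4 : ℝ)) * γf ^ (-(1 / 4 : ℝ)) ≤
      dirichletFactor N₁ z₁ * dirichletFactor N₂ z₂ :=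
    mul_le_mul hb₁ hb₂ hpos.le (le_trans hpos.le hb₁)
  have heq : γf ^ (-(1 / 4 : ℝ)) * γf ^ (-(1 / 4 : ℝ)) = 1 / Real.sqrt γf := by
    rw [← Real.rpow_add hγ0, Real.sqrt_eq_rpow, eq_div_iff (by positivity), ← Real.rpow_add hγ0]
    norm_num [Real.rpow_zero]
  linarith [heq ▸ hmul]
end

section
/- Fix γ_f > 1 and let α* be the smallest positive root of 1 - cos(α) = α²/(2γ_f). For every ε > 0 there exists N₀ such that for all integers N ≥ N₀ and all z ∈ [-(α*-ε)/N, (α*-ε)/N], the inequality cos(z) - (γ_f/N²)(cos(Nz) - 1) - 1 ≥ 0 holds. -/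
open Real

lemma aux_root_lb (γf : ℝ) (hγ : 1 < γf) (αstar : ℝ)
    (hmin : ∀ β : ℝ, 0 < β → 1 - Real.cos β = β ^ 2 / (2 * γf) → αstar ≤ β) :
    ∀ β : ℝ, 0 ≤ β → β < αstar → β ^ 2 / (2 * γf) ≤ 1 - Real.cos β := by
  intro β hβ0 hβlt
  rcases eq_or_lt_of_le hβ0 with h0 | h0
  · simp [← h0]
  by_contra hcon
  push_neg at hcon
  -- g x = 1 - cos x - x^2/(2γf); g β < 0, find δ with g δ > 0
  have hγ0 : (0 : ℝ) < γf := by linarith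
  obtain ⟨c, hc⟩ : ∃ c : ℝ, c = 1 / 2 - 1 / (2 * γf) := ⟨_, rfl⟩
  have hcpos : 0 < c := by
    have : 1 / (2 * γf) < 1 / 2 := by
      apply div_lt_div_of_pos_left <;> linarith
    rw [hc]; linarith
  obtain ⟨s, hs⟩ : ∃ s : ℝ, s = Real.sqrt (96 * c / 5) := ⟨_, rfl⟩
  have hspos : 0 < s := hs ▸ Real.sqrt_pos.mpr (by linarith)
  obtain ⟨δ, hδ⟩ : ∃ δ : ℝ, δ = min β (min 1 (s / 2)) := ⟨_, rfl⟩
  have hδpos : 0 < δ := by rw [hδ]; exact lt_min h0 (lt_min one_pos (by linarith))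
  have hδβ : δ ≤ β := by rw [hδ]; exact min_le_left _ _
  have hδ1 : δ ≤ 1 := by rw [hδ]; exact le_trans (min_le_right _ _) (min_le_left _ _)
  have hδs : δ ≤ s / 2 := by rw [hδ]; exact le_trans (min_le_right _ _) (min_le_right _ _)
  have hδsq : δ ^ 2 < 96 * c / 5 := by
    have h1 : δ ^ 2 ≤ (s / 2) ^ 2 := by
      apply pow_le_pow_left₀ hδpos.le hδs
    have h2 : s ^ 2 = 96 * c / 5 := hs ▸ Real.sq_sqrt (by linarith)
    nlinarith
  -- g δ > 0
  have hcos : |Real.cos δ - (1 - δ ^ 2 / 2)| ≤ |δ| ^ 4 * (5 / 96) :=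
    Real.cos_bound (by rw [abs_of_pos hδpos]; exact hδ1)
  have habs : |δ| = δ := abs_of_pos hδpos
  rw [habs] at hcos
  have hcos' : Real.cos δ ≤ 1 - δ ^ 2 / 2 + δ ^ 4 * (5 / 96) := by
    have := (abs_le.mp hcos).2
    linarith
  have hgδ : δ ^ 2 / (2 * γf) < 1 - Real.cos δ := by
    have key : δ ^ 2 / (2 * γf) = δ ^ 2 * (1 / 2 - c) := by
      rw [hc]; field_simp; ring
    have h4 : δ ^ 4 * (5 / 96) < δ ^ 2 * c := by
      have : δ ^ 4 = δ ^ 2 * δ ^ 2 := by ring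
      rw [this]
      have hδ2 : 0 < δ ^ 2 := by positivity
      nlinarith
    nlinarith
  -- IVT for g on [δ, β]
  have hg : ∀ x : ℝ, (fun x => 1 - Real.cos x - x ^ 2 / (2 * γf)) x = 1 - Real.cos x - x ^ 2 / (2 * γf) := fun _ => rfl
  set g : ℝ → ℝ := fun x => 1 - Real.cos x - x ^ 2 / (2 * γf)
  have hgc : ContinuousOn g (Set.Icc δ β) := by
    apply Continuous.continuousOn
    fun_prop
  have hivt := intermediate_value_Icc' hδβ hgc
  have h0mem : (0 : ℝ) ∈ Set.Icc (g β) (g δ) := by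
    constructor
    · show g β ≤ 0; rw [hg]; linarith
    · show (0:ℝ) ≤ g δ; rw [hg]; linarith
  obtain ⟨r, hrmem, hgr⟩ := hivt h0mem
  have hr0 : 0 < r := lt_of_lt_of_le hδpos hrmem.1
  have hroot' : 1 - Real.cos r = r ^ 2 / (2 * γf) := by
    rw [hg] at hgr; linarith
  have := hmin r hr0 hroot'
  have : r < αstar := lt_of_le_of_lt hrmem.2 hβlt
  linarith

theorem asymptotic_lemma1
    (γf : ℝ) (hγ : 1 < γf) (αstar : ℝ) (hpos : 0 < αstar)
    (hroot : 1 - Real.cos αstar = αstar ^ 2 / (2 * γf))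
    (hmin : ∀ β : ℝ, 0 < β → 1 - Real.cos β = β ^ 2 / (2 * γf) → αstar ≤ β) :
    ∀ ε > 0, ∃ N₀ : ℕ, ∀ N : ℕ, N₀ ≤ N →
      ∀ z ∈ Set.Icc (-((αstar - ε) / N)) ((αstar - ε) / N),
        Real.cos z - (γf / (N : ℝ) ^ 2) * (Real.cos (N * z) - 1) - 1 ≥ 0 := by
  intro ε hε
  refine ⟨1, fun N hN z hz => ?_⟩
  have hN1 : (1 : ℝ) ≤ (N : ℝ) := by exact_mod_cast hN
  have hN0 : (0 : ℝ) < (N : ℝ) := by linarith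
  obtain ⟨hz1, hz2⟩ := hz
  have hzabs : |z| ≤ (αstar - ε) / N := abs_le.mpr ⟨hz1, hz2⟩
  have hβ : (N : ℝ) * |z| ≤ αstar - ε := by
    rw [le_div_iff₀ hN0] at hzabs
    calc (N : ℝ) * |z| = |z| * N := mul_comm _ _
      _ ≤ αstar - ε := hzabs
  have hβ0 : 0 ≤ (N : ℝ) * |z| := by positivity
  have hβlt : (N : ℝ) * |z| < αstar := by linarith
  have haux := aux_root_lb γf hγ αstar hmin ((N : ℝ) * |z|) hβ0 hβlt
  have hcosNz : Real.cos ((N : ℝ) * z) = Real.cos ((N : ℝ) * |z|) := by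
    rcases abs_choice z with h | h
    · rw [h]
    · rw [h]; rw [mul_neg, Real.cos_neg]
  rw [hcosNz] at *
  have hsq : ((N : ℝ) * |z|) ^ 2 = (N : ℝ) ^ 2 * z ^ 2 := by
    rw [mul_pow, sq_abs]
  rw [hsq] at haux
  have hcosz : 1 - z ^ 2 / 2 ≤ Real.cos z := Real.one_sub_sq_div_two_le_cos
  -- γf/N² * (cos(N|z|) - 1) ≤ -z²/2
  have hγ0 : (0 : ℝ) < γf := by linarith
  have hN2 : (0 : ℝ) < (N : ℝ) ^ 2 := by positivity
  have hmul : γf / (N : ℝ) ^ 2 * (Real.cos ((N : ℝ) * |z|) - 1) ≤ -(z ^ 2 / 2) := by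
    have h1 : Real.cos ((N : ℝ) * |z|) - 1 ≤ -((N : ℝ) ^ 2 * z ^ 2 / (2 * γf)) := by
      linarith
    have h2 : γf / (N : ℝ) ^ 2 * (Real.cos ((N : ℝ) * |z|) - 1) ≤
        γf / (N : ℝ) ^ 2 * (-((N : ℝ) ^ 2 * z ^ 2 / (2 * γf))) := by
      apply mul_le_mul_of_nonneg_left h1 (by positivity)
    have h3 : γf / (N : ℝ) ^ 2 * (-((N : ℝ) ^ 2 * z ^ 2 / (2 * γf))) = -(z ^ 2 / 2) := by
      field_simp
    linarith
  linarith
end
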